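/- Let H ≥ 2 be an integer and I = {0,1,2} ∪ {2H}. Then for every positive integer h < H, |hI| = (h+1)². -/

import Mathlib

open Finset Pointwise

/-- `hsum h A` is the `h`-fold sumset of `A` (pointwise sum of `h` copies). -/
def hsum (h : ℕ) (A : Finset ℤ) : Finset ℤ := ∑ _i ∈ Finset.range h, A

/-- `transl t A` is the translate `t + A`. -/
def transl (t : ℤ) (A : Finset ℤ) : Finset ℤ := A.image (t + ·)

noncomputable def E (H h : ℕ) : Finset ℤ :=
  (Finset.range (h+1)).biUnion
    (fun j => Finset.Icc (2*(j:ℤ)*H) (2*(j:ℤ)*H + 2*((h:ℤ)-j)))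

lemma memE {H h : ℕ} {x : ℤ} :
    x ∈ E H h ↔ ∃ j : ℕ, j ≤ h ∧ 2*(j:ℤ)*H ≤ x ∧ x ≤ 2*(j:ℤ)*H + 2*((h:ℤ)-j) := by
  simp [E, Nat.lt_succ_iff, and_assoc]

lemma hsum_eq (H h : ℕ) : hsum h ({0, 1, 2} ∪ {2 * (H : ℤ)}) = E H h := by
  induction h with
  | zero =>
    ext x
    simp only [hsum, Finset.sum_range_zero, memE, Nat.le_zero, Finset.mem_zero]
    constructor
    · rintro rfl; exact ⟨0, rfl, by simp⟩
    · rintro ⟨j, rfl, h1, h2⟩; push_cast at *; omega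
  | succ h ih =>
    have step : hsum (h+1) ({0,1,2} ∪ {2*(H:ℤ)}) = hsum h ({0,1,2} ∪ {2*(H:ℤ)}) + ({0,1,2} ∪ {2*(H:ℤ)}) := by
      simp only [hsum, Finset.sum_range_succ]
    rw [step, ih]
    ext x
    constructor
    · intro hx
      obtain ⟨a, ha, b, hb, rfl⟩ := Finset.mem_add.mp hx
      obtain ⟨j, hj, h1, h2⟩ := memE.mp ha
      simp only [Finset.mem_union, Finset.mem_insert, Finset.mem_singleton] at hb
      rcases hb with ((rfl|rfl|rfl)|rfl)
      · exact memE.mpr ⟨j, by omega, by push_cast; linarith, by push_cast; linarith⟩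
      · exact memE.mpr ⟨j, by omega, by push_cast; linarith, by push_cast; linarith⟩
      · exact memE.mpr ⟨j, by omega, by push_cast; linarith, by push_cast; linarith⟩
      · refine memE.mpr ⟨j+1, by omega, ?_, ?_⟩
        · push_cast; linarith
        · push_cast at *; linarith
    · intro hx
      obtain ⟨j, hj, h1, h2⟩ := memE.mp hx
      rw [Finset.mem_add]
      rcases Nat.lt_or_ge j (h+1) with hjh | hjh
      · have hjh' : j ≤ h := by omega
        by_cases hc0 : x ≤ 2*(j:ℤ)*H + 2*((h:ℤ)-j)
        · exact ⟨x, memE.mpr ⟨j, hjh', h1, hc0⟩, 0, by simp, by ring⟩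
        · by_cases hc1 : x ≤ 2*(j:ℤ)*H + 2*((h:ℤ)-j) + 1
          · refine ⟨x - 1, memE.mpr ⟨j, hjh', by push_cast at *; linarith, by push_cast at *; linarith⟩, 1, by simp, by ring⟩
          · refine ⟨x - 2, memE.mpr ⟨j, hjh', by push_cast at *; linarith, by push_cast at *; linarith⟩, 2, by simp, by ring⟩
      · have hj' : j = h+1 := by omega
        subst hj'
        refine ⟨x - 2*H, memE.mpr ⟨h, le_refl _, ?_, ?_⟩, 2*H, by simp, by ring⟩
        · push_cast at *; linarith
        · push_cast at *; linarith

lemma sum_odd (n : ℕ) : ∑ j ∈ Finset.range n, (2*j+1) = n^2 := by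
  induction n with
  | zero => simp
  | succ n ih => rw [Finset.sum_range_succ, ih]; ring

lemma cardE (H h : ℕ) (hhH : h < H) : (E H h).card = (h+1)^2 := by
  rw [E, Finset.card_biUnion]
  · have key : ∀ j ∈ Finset.range (h+1),
        (Finset.Icc (2*(j:ℤ)*H) (2*(j:ℤ)*H + 2*((h:ℤ)-j))).card = 2*(h-j)+1 := by
      intro j hj
      rw [Finset.mem_range] at hj
      rw [Int.card_Icc]
      have : 2*(j:ℤ)*H + 2*((h:ℤ)-j) + 1 - 2*(j:ℤ)*H = ((2*(h-j)+1 : ℕ) : ℤ) := by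
        push_cast [Nat.cast_sub (by omega : j ≤ h)]
        ring
      rw [this, Int.toNat_natCast]
    rw [Finset.sum_congr rfl key]
    have := Finset.sum_range_reflect (fun j => 2*j+1) (h+1)
    simp only [Nat.add_sub_cancel] at this
    rw [this, sum_odd]
  · intro a ha b hb hab
    rw [Finset.mem_coe, Finset.mem_range] at ha hb
    rw [Function.onFun, Finset.disjoint_left]
    intro x hxa hxb
    rw [Finset.mem_Icc] at hxa hxb
    rcases lt_or_gt_of_ne hab with hlt | hlt
    · have : ((a:ℤ)+1) * H ≤ (b:ℤ) * H := by
        apply mul_le_mul_of_nonneg_right _ (by positivity)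
        exact_mod_cast hlt
      have hH : (h:ℤ) < H := by exact_mod_cast hhH
      nlinarith [hxa.1, hxa.2, hxb.1, hxb.2]
    · have : ((b:ℤ)+1) * H ≤ (a:ℤ) * H := by
        apply mul_le_mul_of_nonneg_right _ (by positivity)
        exact_mod_cast hlt
      have hH : (h:ℤ) < H := by exact_mod_cast hhH
      nlinarith [hxa.1, hxa.2, hxb.1, hxb.2]

theorem stmt_5 (H : ℕ) (hH : 2 ≤ H) (h : ℕ) (hh : 1 ≤ h) (hhH : h < H) :
    (hsum h ({0, 1, 2} ∪ {2 * (H : ℤ)})).card = (h + 1) ^ 2 := by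
  rw [hsum_eq, cardE H h hhH]
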